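/- For a bivariate Gaussian pair (X,Y) with zero means, unit variances and correlation ρ ∈ (0,1), the correlation of X and Y conditioned on Y > v satisfies ρ_v⁺ ~ (ρ/√(1−ρ²))·(1/v) as v → ∞; in particular ρ_v⁺ → 0. -/

import Mathlib

open MeasureTheory ProbabilityTheory Filter Real Set

/-- Expectation of `f` conditioned on the event `A`. -/
noncomputable def cExp {Ω : Type*} [MeasurableSpace Ω] (μ : Measure Ω) (A : Set Ω)
    (f : Ω → ℝ) : ℝ :=
  (∫ ω in A, f ω ∂μ) / (μ A).toReal

/-- Variance of `f` conditioned on the event `A`. -/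
noncomputable def cVar {Ω : Type*} [MeasurableSpace Ω] (μ : Measure Ω) (A : Set Ω)
    (f : Ω → ℝ) : ℝ :=
  cExp μ A (fun ω => (f ω) ^ 2) - (cExp μ A f) ^ 2

/-- Covariance of `f` and `g` conditioned on the event `A`. -/
noncomputable def cCov {Ω : Type*} [MeasurableSpace Ω] (μ : Measure Ω) (A : Set Ω)
    (f g : Ω → ℝ) : ℝ :=
  cExp μ A (fun ω => f ω * g ω) - cExp μ A f * cExp μ A g

/-- Correlation coefficient of `f` and `g` conditioned on the event `A`. -/
noncomputable def cCorr {Ω : Type*} [MeasurableSpace Ω] (μ : Measure Ω) (A : Set Ω)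
    (f g : Ω → ℝ) : ℝ :=
  cCov μ A f g / Real.sqrt (cVar μ A f * cVar μ A g)

/-- The standard normal cumulative distribution function `Φ`. -/
noncomputable def stdPhi (x : ℝ) : ℝ := ((gaussianReal 0 1) (Set.Iic x)).toReal

/-- The standard normal density `φ`. -/
noncomputable def stdphi (x : ℝ) : ℝ := Real.exp (-x ^ 2 / 2) / Real.sqrt (2 * Real.pi)



lemma stdphi_pos (x : ℝ) : 0 < stdphi x :=
  div_pos (Real.exp_pos _) (Real.sqrt_pos.2 (by positivity))

lemma stdphi_eq (x : ℝ) : gaussianPDFReal 0 1 x = stdphi x := by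
  simp [gaussianPDFReal, stdphi, div_eq_inv_mul, mul_comm]

lemma measurable_stdphi : Measurable stdphi := by
  unfold stdphi; fun_prop

lemma hasDerivAt_stdphi (x : ℝ) : HasDerivAt stdphi (-x * stdphi x) x := by
  have h1 : HasDerivAt (fun y : ℝ => -y ^ 2 / 2) (-x) x := by
    have := ((hasDerivAt_pow 2 x).neg).div_const 2
    simpa using this.congr_deriv (by ring)
  have h2 : HasDerivAt (fun y : ℝ => Real.exp (-y ^ 2 / 2)) (Real.exp (-x ^ 2 / 2) * (-x)) x :=
    (Real.hasDerivAt_exp _).comp x h1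
  have := h2.div_const (Real.sqrt (2 * Real.pi))
  have heq : HasDerivAt stdphi (Real.exp (-x ^ 2 / 2) * -x / Real.sqrt (2 * Real.pi)) x := this
  convert heq using 1
  unfold stdphi
  field_simp

lemma integrable_phi : Integrable stdphi := by
  have : Integrable (fun x : ℝ => Real.exp (-(1/2 : ℝ) * x ^ 2)) := integrable_exp_neg_mul_sq (by norm_num)
  have h := this.div_const (Real.sqrt (2 * Real.pi))
  refine h.congr (Filter.Eventually.of_forall fun x => ?_)
  unfold stdphi
  ring_nf

lemma sq_exp_bound (x : ℝ) : x ^ 2 * Real.exp (-(1/4 : ℝ) * x ^ 2) ≤ 4 := by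
  have h : x ^ 2 / 4 ≤ Real.exp (x ^ 2 / 4) :=
    le_trans (by linarith [Real.add_one_le_exp (x ^ 2 / 4)]) le_rfl
  have hx : Real.exp (-(1/4 : ℝ) * x ^ 2) = (Real.exp (x ^ 2 / 4))⁻¹ := by
    rw [← Real.exp_neg]; ring_nf
  rw [hx]
  rw [mul_inv_le_iff₀ (Real.exp_pos _)]
  nlinarith [Real.exp_pos (x ^ 2 / 4)]

lemma integrable_x2phi : Integrable (fun x : ℝ => x ^ 2 * stdphi x) := by
  have base : Integrable (fun x : ℝ => Real.exp (-(1/4 : ℝ) * x ^ 2)) :=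
    integrable_exp_neg_mul_sq (by norm_num)
  have base4 := (base.const_mul 4).div_const (Real.sqrt (2 * Real.pi))
  refine base4.mono' ?_ (Filter.Eventually.of_forall fun x => ?_)
  · exact ((measurable_id.pow_const 2).mul measurable_stdphi).aestronglyMeasurable
  · have h0 : 0 ≤ x ^ 2 * stdphi x := mul_nonneg (sq_nonneg x) (stdphi_pos x).le
    rw [Real.norm_eq_abs, abs_of_nonneg h0]
    unfold stdphi
    have key : x ^ 2 * Real.exp (-x ^ 2 / 2) ≤ 4 * Real.exp (-(1/4 : ℝ) * x ^ 2) := by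
      have e1 : Real.exp (-x ^ 2 / 2) = Real.exp (-(1/4 : ℝ) * x ^ 2) * Real.exp (-(1/4 : ℝ) * x ^ 2) := by
        rw [← Real.exp_add]; ring_nf
      rw [e1, ← mul_assoc]
      exact mul_le_mul_of_nonneg_right (sq_exp_bound x) (Real.exp_pos _).le
    have hs : (0:ℝ) < Real.sqrt (2 * Real.pi) := Real.sqrt_pos.2 (by positivity)
    calc x ^ 2 * (Real.exp (-x ^ 2 / 2) / Real.sqrt (2 * Real.pi))
        = (x ^ 2 * Real.exp (-x ^ 2 / 2)) * (Real.sqrt (2 * Real.pi))⁻¹ := by ring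
      _ ≤ (4 * Real.exp (-(1/4 : ℝ) * x ^ 2)) * (Real.sqrt (2 * Real.pi))⁻¹ :=
        mul_le_mul_of_nonneg_right key (inv_nonneg.2 hs.le)
      _ = 4 * Real.exp (-(1/4 : ℝ) * x ^ 2) / Real.sqrt (2 * Real.pi) := by ring

lemma integrable_xphi : Integrable (fun x : ℝ => x * stdphi x) := by
  refine (integrable_phi.add integrable_x2phi).mono' ?_ (Filter.Eventually.of_forall fun x => ?_)
  · exact (measurable_id.mul measurable_stdphi).aestronglyMeasurable
  · have hφ := stdphi_pos x
    rw [Real.norm_eq_abs, abs_mul, abs_of_pos hφ]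
    have hb : |x| ≤ 1 + x ^ 2 := by nlinarith [abs_nonneg x, sq_abs x]
    have : |x| * stdphi x ≤ stdphi x + x ^ 2 * stdphi x := by nlinarith
    refine this.trans ?_
    simp only [Pi.add_apply]
    exact le_rfl

lemma tendsto_phi_top : Tendsto stdphi atTop (nhds 0) := by
  have h1 : Tendsto (fun x : ℝ => -x ^ 2 / 2) atTop atBot := by
    apply Filter.Tendsto.atBot_div_const (by norm_num)
    exact Filter.tendsto_neg_atBot_iff.mpr (tendsto_pow_atTop (by norm_num))
  have h2 := (Real.tendsto_exp_atBot.comp h1).div_const (Real.sqrt (2 * Real.pi))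
  have : (fun x : ℝ => Real.exp (-x ^ 2 / 2) / Real.sqrt (2 * Real.pi)) = stdphi := rfl
  rw [zero_div] at h2
  exact this ▸ h2

lemma tendsto_xphi_top : Tendsto (fun x : ℝ => x * stdphi x) atTop (nhds 0) := by
  have hub : ∀ᶠ x : ℝ in atTop, x * stdphi x ≤ x * Real.exp (-x) := by
    filter_upwards [eventually_ge_atTop (2:ℝ)] with x hx
    have hφ : stdphi x ≤ Real.exp (-x) := by
      unfold stdphi
      have h1 : Real.exp (-x ^ 2 / 2) ≤ Real.exp (-x) := by
        apply Real.exp_le_exp.2; nlinarith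
      have h2 : (1:ℝ) ≤ Real.sqrt (2 * Real.pi) := by
        rw [show (1:ℝ) = Real.sqrt 1 by simp]
        apply Real.sqrt_le_sqrt; nlinarith [Real.pi_gt_three]
      calc Real.exp (-x ^ 2 / 2) / Real.sqrt (2 * Real.pi) ≤ Real.exp (-x ^ 2 / 2) / 1 := by
            apply div_le_div_of_nonneg_left (Real.exp_pos _).le one_pos h2
      _ = Real.exp (-x ^ 2 / 2) := by ring
      _ ≤ Real.exp (-x) := h1
    exact mul_le_mul_of_nonneg_left hφ (by linarith)
  have hlb : ∀ᶠ x : ℝ in atTop, 0 ≤ x * stdphi x := by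
    filter_upwards [eventually_ge_atTop (0:ℝ)] with x hx
    exact mul_nonneg hx (stdphi_pos x).le
  have hx_exp : Tendsto (fun x : ℝ => x * Real.exp (-x)) atTop (nhds 0) := by
    simpa using tendsto_pow_mul_exp_neg_atTop_nhds_zero 1
  exact tendsto_of_tendsto_of_tendsto_of_le_of_le' tendsto_const_nhds hx_exp hlb hub

lemma tendsto_xphi_bot : Tendsto (fun x : ℝ => x * stdphi x) atBot (nhds 0) := by
  have heq : (fun x : ℝ => x * stdphi x) = (fun x : ℝ => -((-x) * stdphi (-x))) := by
    funext x; simp [stdphi]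
  rw [heq]
  have := (tendsto_xphi_top.comp tendsto_neg_atBot_atTop).neg
  simpa [Function.comp] using this

noncomputable def QQ (v : ℝ) : ℝ := ∫ x in Ioi v, stdphi x

lemma QQ_pos (v : ℝ) : 0 < QQ v := by
  unfold QQ
  rw [setIntegral_pos_iff_support_of_nonneg_ae
    (Filter.Eventually.of_forall fun x => (stdphi_pos x).le) integrable_phi.integrableOn]
  have : Function.support stdphi = Set.univ := by
    ext x; simp [Function.mem_support, (stdphi_pos x).ne']
  rw [this, Set.univ_inter]
  simp [Real.volume_Ioi]

lemma int_xphi_Ioi (v : ℝ) : ∫ x in Ioi v, x * stdphi x = stdphi v := by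
  have hderiv : ∀ x ∈ Ici v, HasDerivAt (fun y => -stdphi y) (x * stdphi x) x := by
    intro x _
    exact (hasDerivAt_stdphi x).neg.congr_deriv (by ring)
  have := integral_Ioi_of_hasDerivAt_of_tendsto' hderiv integrable_xphi.integrableOn
    (by simpa using tendsto_phi_top.neg)
  simpa using this

lemma int_x2phi_aux (v : ℝ) : ∫ x in Ioi v, (x ^ 2 - 1) * stdphi x = v * stdphi v := by
  have hderiv : ∀ x ∈ Ici v, HasDerivAt (fun y => -(y * stdphi y)) ((x ^ 2 - 1) * stdphi x) x := by
    intro x _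
    have h := ((hasDerivAt_id x).mul (hasDerivAt_stdphi x)).neg
    refine h.congr_deriv ?_
    simp only [id_eq]
    ring
  have hint : IntegrableOn (fun x => (x ^ 2 - 1) * stdphi x) (Ioi v) := by
    refine ((integrable_x2phi.sub integrable_phi).congr
      (Filter.Eventually.of_forall fun x => by simp only [Pi.sub_apply]; ring)).integrableOn
  have := integral_Ioi_of_hasDerivAt_of_tendsto' hderiv hint
    (by simpa using tendsto_xphi_top.neg)
  simpa using this

lemma int_x2phi_Ioi (v : ℝ) : ∫ x in Ioi v, x ^ 2 * stdphi x = v * stdphi v + QQ v := by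
  have h1 : ∫ x in Ioi v, ((x ^ 2 - 1) * stdphi x + stdphi x) = v * stdphi v + QQ v := by
    rw [integral_add (((integrable_x2phi.sub integrable_phi).congr
      (Filter.Eventually.of_forall fun x => by simp only [Pi.sub_apply]; ring)).integrableOn)
      integrable_phi.integrableOn, int_x2phi_aux]
    rfl
  rw [← h1]
  congr 1
  funext x
  ring

/-- derivative helper for Mills-type bounds -/
lemma mills_hasDerivAt (c1 c3 c5 c7 : ℝ) {x : ℝ} (hx : x ≠ 0) :
    HasDerivAt (fun y => -((c1 / y + c3 / y ^ 3 + c5 / y ^ 5 + c7 / y ^ 7) * stdphi y))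
      ((c1 + (c1 + c3) / x ^ 2 + (3 * c3 + c5) / x ^ 4 + (5 * c5 + c7) / x ^ 6 + 7 * c7 / x ^ 8)
        * stdphi x) x := by
  have h1 : HasDerivAt (fun y : ℝ => c1 / y) ((0 * x - c1 * 1) / x ^ 2) x :=
    (hasDerivAt_const x c1).div (hasDerivAt_id x) hx
  have h3 : HasDerivAt (fun y : ℝ => c3 / y ^ 3) ((0 * x ^ 3 - c3 * (3 * x ^ 2)) / (x ^ 3) ^ 2) x :=
    (hasDerivAt_const x c3).div (by simpa using hasDerivAt_pow 3 x) (pow_ne_zero 3 hx)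
  have h5 : HasDerivAt (fun y : ℝ => c5 / y ^ 5) ((0 * x ^ 5 - c5 * (5 * x ^ 4)) / (x ^ 5) ^ 2) x :=
    (hasDerivAt_const x c5).div (by simpa using hasDerivAt_pow 5 x) (pow_ne_zero 5 hx)
  have h7 : HasDerivAt (fun y : ℝ => c7 / y ^ 7) ((0 * x ^ 7 - c7 * (7 * x ^ 6)) / (x ^ 7) ^ 2) x :=
    (hasDerivAt_const x c7).div (by simpa using hasDerivAt_pow 7 x) (pow_ne_zero 7 hx)
  have hp := ((h1.add h3).add h5).add h7
  have h := (hp.mul (hasDerivAt_stdphi x)).neg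
  refine h.congr_deriv ?_
  simp only [Pi.add_apply]
  field_simp
  ring

lemma mills_tendsto (c1 c3 c5 c7 : ℝ) :
    Tendsto (fun y : ℝ => -((c1 / y + c3 / y ^ 3 + c5 / y ^ 5 + c7 / y ^ 7) * stdphi y))
      atTop (nhds 0) := by
  have hpow : ∀ k : ℕ, 0 < k → Tendsto (fun y : ℝ => (y ^ k)⁻¹) atTop (nhds 0) := by
    intro k hk
    exact (tendsto_pow_atTop hk.ne').inv_tendsto_atTop
  have hp : Tendsto (fun y : ℝ => c1 / y + c3 / y ^ 3 + c5 / y ^ 5 + c7 / y ^ 7) atTop (nhds 0) := by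
    have h1 := ((hpow 1 one_pos).const_mul c1)
    have h3 := ((hpow 3 (by norm_num)).const_mul c3)
    have h5 := ((hpow 5 (by norm_num)).const_mul c5)
    have h7 := ((hpow 7 (by norm_num)).const_mul c7)
    have := ((h1.add h3).add h5).add h7
    simpa [div_eq_mul_inv, mul_comm] using this
  simpa using (hp.mul tendsto_phi_top).neg

lemma mills_integrable {v : ℝ} (hv : 0 < v) (c : ℝ) (k : ℕ) (hk : 0 < k) :
    IntegrableOn (fun x : ℝ => (1 + c / x ^ k) * stdphi x) (Ioi v) := by
  refine Integrable.mono' ((integrable_phi.const_mul (1 + |c| / v ^ k)).integrableOn) ?_ ?_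
  · apply Measurable.aestronglyMeasurable
    apply Measurable.mul _ measurable_stdphi
    exact (measurable_const.div (measurable_id.pow_const k)).const_add 1
  · filter_upwards [ae_restrict_mem measurableSet_Ioi] with x hx
    have hxv : v < x := hx
    have hx0 : 0 < x := hv.trans hxv
    have hb : |1 + c / x ^ k| ≤ 1 + |c| / v ^ k := by
      refine (abs_add_le _ _).trans ?_
      rw [abs_one, abs_div, abs_pow, abs_of_pos hx0]
      have : |c| / x ^ k ≤ |c| / v ^ k := by
        apply div_le_div_of_nonneg_left (abs_nonneg c) (by positivity)
        exact pow_le_pow_left₀ hv.le hxv.le k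
      linarith
    rw [Real.norm_eq_abs, abs_mul, abs_of_pos (stdphi_pos x)]
    exact mul_le_mul_of_nonneg_right hb (stdphi_pos x).le

lemma mills_integral_upper {v : ℝ} (hv : 0 < v) :
    ∫ x in Ioi v, (1 + 15 / x ^ 6) * stdphi x = (1 / v - 1 / v ^ 3 + 3 / v ^ 5) * stdphi v := by
  have hderiv : ∀ x ∈ Ici v,
      HasDerivAt (fun y => -((1 / y + (-1) / y ^ 3 + 3 / y ^ 5 + 0 / y ^ 7) * stdphi y))
        ((1 + 15 / x ^ 6) * stdphi x) x := by
    intro x hx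
    have hx0 : x ≠ 0 := (hv.trans_le hx).ne'
    have := mills_hasDerivAt 1 (-1) 3 0 hx0
    convert this using 2
    norm_num
  have := integral_Ioi_of_hasDerivAt_of_tendsto' hderiv (mills_integrable hv 15 6 (by norm_num))
    (mills_tendsto 1 (-1) 3 0)
  rw [this]
  ring

lemma mills_integral_lower {v : ℝ} (hv : 0 < v) :
    ∫ x in Ioi v, (1 + (-105) / x ^ 8) * stdphi x
      = (1 / v - 1 / v ^ 3 + 3 / v ^ 5 - 15 / v ^ 7) * stdphi v := by
  have hderiv : ∀ x ∈ Ici v,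
      HasDerivAt (fun y => -((1 / y + (-1) / y ^ 3 + 3 / y ^ 5 + (-15) / y ^ 7) * stdphi y))
        ((1 + (-105) / x ^ 8) * stdphi x) x := by
    intro x hx
    have hx0 : x ≠ 0 := (hv.trans_le hx).ne'
    have := mills_hasDerivAt 1 (-1) 3 (-15) hx0
    convert this using 2
    norm_num
  have := integral_Ioi_of_hasDerivAt_of_tendsto' hderiv (mills_integrable hv (-105) 8 (by norm_num))
    (mills_tendsto 1 (-1) 3 (-15))
  rw [this]
  ring

lemma mills_upper {v : ℝ} (hv : 0 < v) :
    QQ v ≤ (1 / v - 1 / v ^ 3 + 3 / v ^ 5) * stdphi v := by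
  rw [← mills_integral_upper hv]
  apply setIntegral_mono_on integrable_phi.integrableOn
    (mills_integrable hv 15 6 (by norm_num)) measurableSet_Ioi
  intro x hx
  have hx0 : 0 < x := hv.trans hx
  have h1 : 0 ≤ 15 / x ^ 6 := by positivity
  nlinarith [stdphi_pos x]

lemma mills_lower {v : ℝ} (hv : 0 < v) :
    (1 / v - 1 / v ^ 3 + 3 / v ^ 5 - 15 / v ^ 7) * stdphi v ≤ QQ v := by
  rw [← mills_integral_lower hv]
  apply setIntegral_mono_on (mills_integrable hv (-105) 8 (by norm_num))
    integrable_phi.integrableOn measurableSet_Ioi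
  intro x hx
  have hx0 : 0 < x := hv.trans hx
  have h1 : 0 ≤ 105 / x ^ 8 := by positivity
  have h2 : (-105 : ℝ) / x ^ 8 = -(105 / x ^ 8) := by ring
  nlinarith [stdphi_pos x]

noncomputable def sfun (v : ℝ) : ℝ :=
  (v * stdphi v + QQ v) / QQ v - (stdphi v / QQ v) ^ 2

noncomputable def tfun (v : ℝ) : ℝ := v * QQ v / stdphi v
noncomputable def ufun (v : ℝ) : ℝ := v ^ 2 * (1 - tfun v)
noncomputable def wfun (v : ℝ) : ℝ := v ^ 2 * (1 - ufun v)

lemma tfun_bounds {v : ℝ} (hv : 0 < v) :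
    1 - 1 / v ^ 2 + 3 / v ^ 4 - 15 / v ^ 6 ≤ tfun v ∧ tfun v ≤ 1 - 1 / v ^ 2 + 3 / v ^ 4 := by
  have hφ := stdphi_pos v
  have hu := mills_upper hv
  have hl := mills_lower hv
  unfold tfun
  constructor
  · rw [le_div_iff₀ hφ]
    have := mul_le_mul_of_nonneg_left hl hv.le
    calc (1 - 1 / v ^ 2 + 3 / v ^ 4 - 15 / v ^ 6) * stdphi v
        = v * ((1 / v - 1 / v ^ 3 + 3 / v ^ 5 - 15 / v ^ 7) * stdphi v) := by
          field_simp
      _ ≤ v * QQ v := this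
  · rw [div_le_iff₀ hφ]
    have := mul_le_mul_of_nonneg_left hu hv.le
    calc v * QQ v ≤ v * ((1 / v - 1 / v ^ 3 + 3 / v ^ 5) * stdphi v) := this
      _ = (1 - 1 / v ^ 2 + 3 / v ^ 4) * stdphi v := by field_simp

lemma ufun_bounds {v : ℝ} (hv : 0 < v) :
    1 - 3 / v ^ 2 ≤ ufun v ∧ ufun v ≤ 1 - 3 / v ^ 2 + 15 / v ^ 4 := by
  obtain ⟨h1, h2⟩ := tfun_bounds hv
  unfold ufun
  constructor
  · have : 1 / v ^ 2 - 3 / v ^ 4 ≤ 1 - tfun v := by linarith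
    have h := mul_le_mul_of_nonneg_left this (sq_nonneg v)
    calc (1 : ℝ) - 3 / v ^ 2 = v ^ 2 * (1 / v ^ 2 - 3 / v ^ 4) := by field_simp
      _ ≤ v ^ 2 * (1 - tfun v) := h
  · have : 1 - tfun v ≤ 1 / v ^ 2 - 3 / v ^ 4 + 15 / v ^ 6 := by linarith
    have h := mul_le_mul_of_nonneg_left this (sq_nonneg v)
    calc v ^ 2 * (1 - tfun v) ≤ v ^ 2 * (1 / v ^ 2 - 3 / v ^ 4 + 15 / v ^ 6) := h
      _ = 1 - 3 / v ^ 2 + 15 / v ^ 4 := by field_simp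

lemma wfun_bounds {v : ℝ} (hv : 0 < v) :
    3 - 15 / v ^ 2 ≤ wfun v ∧ wfun v ≤ 3 := by
  obtain ⟨h1, h2⟩ := ufun_bounds hv
  unfold wfun
  constructor
  · have : 3 / v ^ 2 - 15 / v ^ 4 ≤ 1 - ufun v := by linarith
    calc (3 : ℝ) - 15 / v ^ 2 = v ^ 2 * (3 / v ^ 2 - 15 / v ^ 4) := by field_simp
      _ ≤ v ^ 2 * (1 - ufun v) := mul_le_mul_of_nonneg_left this (sq_nonneg v)
  · have : 1 - ufun v ≤ 3 / v ^ 2 := by linarith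
    calc v ^ 2 * (1 - ufun v) ≤ v ^ 2 * (3 / v ^ 2) := mul_le_mul_of_nonneg_left this (sq_nonneg v)
      _ = 3 := by field_simp

lemma tendsto_inv_pow_k (k : ℕ) (hk : 0 < k) :
    Tendsto (fun v : ℝ => 1 / v ^ k) atTop (nhds 0) := by
  have h := tendsto_inv_atTop_zero.comp (tendsto_pow_atTop (α := ℝ) hk.ne')
  apply h.congr
  intro v
  simp [Function.comp, one_div]

lemma myTendsto_cdp (c : ℝ) (k : ℕ) (hk : 0 < k) :
    Tendsto (fun v : ℝ => c / v ^ k) atTop (nhds 0) := by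
  have h := (tendsto_inv_pow_k k hk).const_mul c
  rw [mul_zero] at h
  apply h.congr
  intro v
  rw [mul_one_div]

lemma tendsto_ufun : Tendsto ufun atTop (nhds 1) := by
  apply tendsto_of_tendsto_of_tendsto_of_le_of_le'
    (g := fun v : ℝ => 1 - 3 / v ^ 2) (h := fun v : ℝ => 1 - 3 / v ^ 2 + 15 / v ^ 4)
  · simpa using tendsto_const_nhds.sub (myTendsto_cdp 3 2 (by norm_num))
  · simpa using (tendsto_const_nhds.sub (myTendsto_cdp 3 2 (by norm_num))).add
      (myTendsto_cdp 15 4 (by norm_num))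
  · filter_upwards [eventually_gt_atTop (0:ℝ)] with v hv using (ufun_bounds hv).1
  · filter_upwards [eventually_gt_atTop (0:ℝ)] with v hv using (ufun_bounds hv).2

lemma tendsto_wfun : Tendsto wfun atTop (nhds 3) := by
  apply tendsto_of_tendsto_of_tendsto_of_le_of_le'
    (g := fun v : ℝ => 3 - 15 / v ^ 2) (h := fun _ : ℝ => 3)
  · simpa using tendsto_const_nhds.sub (myTendsto_cdp 15 2 (by norm_num))
  · exact tendsto_const_nhds
  · filter_upwards [eventually_gt_atTop (0:ℝ)] with v hv using (wfun_bounds hv).1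
  · filter_upwards [eventually_gt_atTop (0:ℝ)] with v hv using (wfun_bounds hv).2

lemma tendsto_tfun : Tendsto tfun atTop (nhds 1) := by
  apply tendsto_of_tendsto_of_tendsto_of_le_of_le'
    (g := fun v : ℝ => 1 - 1 / v ^ 2 + 3 / v ^ 4 - 15 / v ^ 6)
    (h := fun v : ℝ => 1 - 1 / v ^ 2 + 3 / v ^ 4)
  · simpa using (((tendsto_const_nhds (x := (1:ℝ))).sub (myTendsto_cdp 1 2 (by norm_num))).add
      (myTendsto_cdp 3 4 (by norm_num))).sub (myTendsto_cdp 15 6 (by norm_num))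
  · simpa using ((tendsto_const_nhds (x := (1:ℝ))).sub (myTendsto_cdp 1 2 (by norm_num))).add
      (myTendsto_cdp 3 4 (by norm_num))
  · filter_upwards [eventually_gt_atTop (0:ℝ)] with v hv using (tfun_bounds hv).1
  · filter_upwards [eventually_gt_atTop (0:ℝ)] with v hv using (tfun_bounds hv).2

lemma sfun_identity {v : ℝ} (hv : 0 < v) :
    v ^ 2 * sfun v = (wfun v - 2 * ufun v + ufun v ^ 2 * (1 / v ^ 2)) / tfun v ^ 2 := by
  have hφ := stdphi_pos v
  have hQ := QQ_pos v
  unfold sfun wfun ufun tfun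
  field_simp
  ring

lemma tendsto_v2s : Tendsto (fun v : ℝ => v ^ 2 * sfun v) atTop (nhds 1) := by
  have hnum : Tendsto (fun v : ℝ => wfun v - 2 * ufun v + ufun v ^ 2 * (1 / v ^ 2)) atTop
      (nhds (3 - 2 * 1 + 1 ^ 2 * 0)) := by
    exact (tendsto_wfun.sub (tendsto_ufun.const_mul 2)).add
      ((tendsto_ufun.pow 2).mul (tendsto_inv_pow_k 2 (by norm_num)))
  have hden : Tendsto (fun v : ℝ => tfun v ^ 2) atTop (nhds (1 ^ 2)) := tendsto_tfun.pow 2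
  have := hnum.div hden (by norm_num)
  have heq : Tendsto (fun v : ℝ => (wfun v - 2 * ufun v + ufun v ^ 2 * (1 / v ^ 2)) / tfun v ^ 2)
      atTop (nhds 1) := by
    convert this using 2
    all_goals norm_num
  apply heq.congr'
  filter_upwards [eventually_gt_atTop (0:ℝ)] with v hv
  exact (sfun_identity hv).symm

lemma tendsto_sfun : Tendsto sfun atTop (nhds 0) := by
  have h := tendsto_v2s.mul (tendsto_inv_pow_k 2 (by norm_num))
  rw [mul_zero] at h
  apply h.congr'
  filter_upwards [eventually_gt_atTop (0:ℝ)] with v hv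
  field_simp

lemma eventually_sfun_pos : ∀ᶠ v : ℝ in atTop, 0 < sfun v := by
  have h := tendsto_v2s.eventually (eventually_gt_nhds (show (1:ℝ)/2 < 1 by norm_num))
  filter_upwards [h, eventually_gt_atTop (0:ℝ)] with v h1 h2
  nlinarith

lemma stdphi_neg (x : ℝ) : stdphi (-x) = stdphi x := by simp [stdphi]

lemma tendsto_phi_bot : Tendsto stdphi atBot (nhds 0) := by
  have := tendsto_phi_top.comp tendsto_neg_atBot_atTop
  apply this.congr
  intro x
  simp [Function.comp, stdphi_neg]

lemma gauss_setIntegral (v : ℝ) {g : ℝ → ℝ} (hg : Measurable g) :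
    ∫ x in Ioi v, g x ∂(gaussianReal 0 1) = ∫ x in Ioi v, g x * stdphi x := by
  rw [gaussianReal_of_var_ne_zero 0 one_ne_zero]
  have hpdf : gaussianPDF 0 1 = fun x => ((Real.toNNReal (gaussianPDFReal 0 1 x) : NNReal) : ENNReal) :=
    rfl
  rw [hpdf, setIntegral_withDensity_eq_setIntegral_smul
    (measurable_gaussianPDFReal 0 1).real_toNNReal g measurableSet_Ioi]
  apply setIntegral_congr_fun measurableSet_Ioi
  intro x _
  simp only [NNReal.smul_def, Real.coe_toNNReal _ (gaussianPDFReal_nonneg 0 1 x), stdphi_eq,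
    smul_eq_mul]
  rw [mul_comm, Real.coe_toNNReal _ (stdphi_pos x).le]

lemma gauss_integral {g : ℝ → ℝ} (hg : Measurable g) :
    ∫ x, g x ∂(gaussianReal 0 1) = ∫ x, g x * stdphi x := by
  rw [gaussianReal_of_var_ne_zero 0 one_ne_zero]
  have hpdf : gaussianPDF 0 1 = fun x => ((Real.toNNReal (gaussianPDFReal 0 1 x) : NNReal) : ENNReal) :=
    rfl
  rw [hpdf, integral_withDensity_eq_integral_smul (measurable_gaussianPDFReal 0 1).real_toNNReal g]
  apply integral_congr_ae
  apply Filter.Eventually.of_forall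
  intro x
  simp only [NNReal.smul_def, Real.coe_toNNReal _ (gaussianPDFReal_nonneg 0 1 x), stdphi_eq,
    smul_eq_mul]
  rw [mul_comm, Real.coe_toNNReal _ (stdphi_pos x).le]

lemma gauss_integrable {g : ℝ → ℝ} (hg : Measurable g)
    (h : Integrable (fun x => g x * stdphi x)) : Integrable g (gaussianReal 0 1) := by
  rw [gaussianReal_of_var_ne_zero 0 one_ne_zero,
    integrable_withDensity_iff (measurable_gaussianPDF 0 1)
      (Filter.Eventually.of_forall fun x => ENNReal.ofReal_lt_top)]
  apply h.congr
  apply Filter.Eventually.of_forall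
  intro x
  have : (gaussianPDF 0 1 x).toReal = stdphi x := by
    rw [show gaussianPDF 0 1 x = ENNReal.ofReal (gaussianPDFReal 0 1 x) from rfl,
      ENNReal.toReal_ofReal (gaussianPDFReal_nonneg 0 1 x), stdphi_eq]
  show g x * stdphi x = g x * (gaussianPDF 0 1 x).toReal
  rw [this]

lemma gauss_measure_Ioi (v : ℝ) : ((gaussianReal 0 1) (Ioi v)).toReal = QQ v := by
  rw [gaussianReal_apply_eq_integral 0 one_ne_zero,
    ENNReal.toReal_ofReal (setIntegral_nonneg measurableSet_Ioi
      fun x _ => gaussianPDFReal_nonneg 0 1 x)]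
  unfold QQ
  exact setIntegral_congr_fun measurableSet_Ioi fun x _ => stdphi_eq x

lemma gauss_mean : ∫ x, x ∂(gaussianReal 0 1) = 0 := by
  rw [gauss_integral (g := fun x => x) measurable_id]
  have h := integral_of_hasDerivAt_of_tendsto (f := fun y => -stdphi y)
    (fun x => (hasDerivAt_stdphi x).neg.congr_deriv (by ring)) integrable_xphi
    (by simpa using tendsto_phi_bot.neg) (by simpa using tendsto_phi_top.neg)
  simpa using h

lemma gauss_phi_total : ∫ x, stdphi x = 1 := by
  rw [← integral_gaussianPDFReal_eq_one 0 one_ne_zero]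
  exact integral_congr_ae (Filter.Eventually.of_forall fun x => (stdphi_eq x).symm)

lemma gauss_sq : ∫ x, x ^ 2 ∂(gaussianReal 0 1) = 1 := by
  rw [gauss_integral (g := fun x => x ^ 2) (measurable_id.pow_const 2)]
  have hint : Integrable (fun x : ℝ => (x ^ 2 - 1) * stdphi x) :=
    (integrable_x2phi.sub integrable_phi).congr
      (Filter.Eventually.of_forall fun x => by simp only [Pi.sub_apply]; ring)
  have h0 : ∫ x, (x ^ 2 - 1) * stdphi x = 0 := by
    have hderiv : ∀ x : ℝ, HasDerivAt (fun y => -(y * stdphi y)) ((x ^ 2 - 1) * stdphi x) x := by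
      intro x
      have h := ((hasDerivAt_id x).mul (hasDerivAt_stdphi x)).neg
      refine h.congr_deriv ?_
      simp only [id_eq]
      ring
    have h := integral_of_hasDerivAt_of_tendsto hderiv hint
      (by simpa using tendsto_xphi_bot.neg) (by simpa using tendsto_xphi_top.neg)
    simpa using h
  have : ∫ x, x ^ 2 * stdphi x = ∫ x, ((x ^ 2 - 1) * stdphi x + stdphi x) :=
    integral_congr_ae (Filter.Eventually.of_forall fun x => by ring)
  rw [this, integral_add hint integrable_phi, h0, gauss_phi_total]
  norm_num

theorem stmt5 {Ω : Type*} [MeasurableSpace Ω] (P : Measure Ω) [IsProbabilityMeasure P]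
    (Y Z : Ω → ℝ) (hY : Measurable Y) (hZ : Measurable Z)
    (hYlaw : Measure.map Y P = gaussianReal 0 1) (hZlaw : Measure.map Z P = gaussianReal 0 1)
    (hind : IndepFun Y Z P)
    (ρ : ℝ) (hρ : ρ ∈ Set.Ioo (0 : ℝ) 1)
    (X : Ω → ℝ) (hX : X = fun ω => ρ * Y ω + Real.sqrt (1 - ρ ^ 2) * Z ω) :
    Tendsto (fun v : ℝ => v * cCorr P {ω | Y ω > v} X Y) atTop
        (nhds (ρ / Real.sqrt (1 - ρ ^ 2))) ∧
      Tendsto (fun v : ℝ => cCorr P {ω | Y ω > v} X Y) atTop (nhds 0) := by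
  obtain ⟨hρ0, hρ1⟩ := hρ
  have hρ2 : 0 < 1 - ρ ^ 2 := by nlinarith
  set c : ℝ := Real.sqrt (1 - ρ ^ 2) with hcdef
  have hc2 : c ^ 2 = 1 - ρ ^ 2 := Real.sq_sqrt hρ2.le
  have hc0 : 0 < c := Real.sqrt_pos.2 hρ2
  -- global integrability facts
  have hYint : Integrable Y P := by
    have h1 : Integrable (fun x : ℝ => x) (gaussianReal 0 1) :=
      gauss_integrable measurable_id integrable_xphi
    have h2 : Integrable (fun x : ℝ => x) (Measure.map Y P) := hYlaw ▸ h1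
    have h3 := (integrable_map_measure measurable_id.aestronglyMeasurable hY.aemeasurable).mp h2
    simpa [Function.comp] using h3
  have hZint : Integrable Z P := by
    have h1 : Integrable (fun x : ℝ => x) (gaussianReal 0 1) :=
      gauss_integrable measurable_id integrable_xphi
    have h2 : Integrable (fun x : ℝ => x) (Measure.map Z P) := hZlaw ▸ h1
    have h3 := (integrable_map_measure measurable_id.aestronglyMeasurable hZ.aemeasurable).mp h2
    simpa [Function.comp] using h3
  have hY2int : Integrable (fun ω => Y ω ^ 2) P := by
    have h1 : Integrable (fun x : ℝ => x ^ 2) (gaussianReal 0 1) :=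
      gauss_integrable (measurable_id.pow_const 2) integrable_x2phi
    have h2 : Integrable (fun x : ℝ => x ^ 2) (Measure.map Y P) := hYlaw ▸ h1
    have h3 := (integrable_map_measure (measurable_id.pow_const 2).aestronglyMeasurable
      hY.aemeasurable).mp h2
    exact h3
  have hZ2int : Integrable (fun ω => Z ω ^ 2) P := by
    have h1 : Integrable (fun x : ℝ => x ^ 2) (gaussianReal 0 1) :=
      gauss_integrable (measurable_id.pow_const 2) integrable_x2phi
    have h2 : Integrable (fun x : ℝ => x ^ 2) (Measure.map Z P) := hZlaw ▸ h1
    have h3 := (integrable_map_measure (measurable_id.pow_const 2).aestronglyMeasurable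
      hZ.aemeasurable).mp h2
    exact h3
  have hYZint : Integrable (fun ω => Y ω * Z ω) P := hind.integrable_mul hYint hZint
  have hZmean : ∫ ω, Z ω ∂P = 0 := by
    have h1 : ∫ x, (fun x : ℝ => x) x ∂(Measure.map Z P) = ∫ ω, Z ω ∂P :=
      integral_map hZ.aemeasurable measurable_id.aestronglyMeasurable
    rw [← h1, hZlaw]
    exact gauss_mean
  have hZsq : ∫ ω, Z ω ^ 2 ∂P = 1 := by
    have h1 : ∫ x, (fun x : ℝ => x ^ 2) x ∂(Measure.map Z P) = ∫ ω, Z ω ^ 2 ∂P :=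
      integral_map hZ.aemeasurable (measurable_id.pow_const 2).aestronglyMeasurable
    rw [← h1, hZlaw]
    exact gauss_sq
  -- key pointwise identity
  have key : ∀ v : ℝ, cCorr P {ω | Y ω > v} X Y
      = ρ * sfun v / Real.sqrt ((ρ ^ 2 * sfun v + (1 - ρ ^ 2)) * sfun v) := by
    intro v
    rw [show {ω | Y ω > v} = Y ⁻¹' Ioi v from rfl]
    have hQ := QQ_pos v
    have hAm : MeasurableSet (Y ⁻¹' Ioi v) := hY measurableSet_Ioi
    have hPA : (P (Y ⁻¹' Ioi v)).toReal = QQ v := by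
      rw [← Measure.map_apply hY measurableSet_Ioi, hYlaw, gauss_measure_Ioi]
    have pull : ∀ (g : ℝ → ℝ), Measurable g →
        ∫ ω in Y ⁻¹' Ioi v, g (Y ω) ∂P = ∫ x in Ioi v, g x * stdphi x := by
      intro g hg
      have h1 : ∫ x in Ioi v, g x ∂(Measure.map Y P) = ∫ ω in Y ⁻¹' Ioi v, g (Y ω) ∂P :=
        setIntegral_map measurableSet_Ioi hg.aestronglyMeasurable hY.aemeasurable
      rw [← h1, hYlaw, gauss_setIntegral v hg]
    have hIY : ∫ ω in Y ⁻¹' Ioi v, Y ω ∂P = stdphi v := by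
      have h := pull (fun x => x) measurable_id
      rw [int_xphi_Ioi] at h
      exact h
    have hIY2 : ∫ ω in Y ⁻¹' Ioi v, Y ω ^ 2 ∂P = v * stdphi v + QQ v := by
      have h := pull (fun x => x ^ 2) (measurable_id.pow_const 2)
      rw [int_x2phi_Ioi] at h
      exact h
    set ind : ℝ → ℝ := (Ioi v).indicator (fun _ => 1) with hinddef
    have hindm : Measurable ind := measurable_const.indicator measurableSet_Ioi
    have hindY : ∫ ω, ind (Y ω) ∂P = QQ v := by
      have h1 : ∀ ω, ind (Y ω) = (Y ⁻¹' Ioi v).indicator (fun _ => (1:ℝ)) ω := by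
        intro ω
        by_cases h : Y ω ∈ Ioi v <;> simp [hinddef, Set.indicator_apply, h]
      rw [integral_congr_ae (Filter.Eventually.of_forall h1), integral_indicator hAm]
      simp [hPA]; exact hPA
    have hprod : ∀ (F : ℝ → ℝ), Measurable F → ∀ (g : ℝ → ℝ), Measurable g →
        ∫ ω, F (Y ω) * g (Z ω) ∂P = (∫ ω, F (Y ω) ∂P) * ∫ ω, g (Z ω) ∂P := by
      intro F hF g hg
      have h2 : IndepFun (fun ω => F (Y ω)) (fun ω => g (Z ω)) P :=
        hind.comp hF hg
      have h3 := IndepFun.integral_mul_eq_mul_integral h2 ((hF.comp hY).aestronglyMeasurable)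
        ((hg.comp hZ).aestronglyMeasurable)
      simpa [Pi.mul_apply] using h3
    have hIZ : ∫ ω in Y ⁻¹' Ioi v, Z ω ∂P = 0 := by
      have h1 : ∫ ω in Y ⁻¹' Ioi v, Z ω ∂P = ∫ ω, ind (Y ω) * Z ω ∂P := by
        rw [← integral_indicator hAm]
        apply integral_congr_ae (Filter.Eventually.of_forall ?_)
        intro ω
        by_cases h : Y ω ∈ Ioi v <;> simp [Set.indicator_apply, h, hinddef]
      have h2 := hprod ind hindm (fun x => x) measurable_id
      rw [hZmean, mul_zero] at h2
      exact h1.trans h2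
    have hIYZ : ∫ ω in Y ⁻¹' Ioi v, Y ω * Z ω ∂P = 0 := by
      have h1 : ∫ ω in Y ⁻¹' Ioi v, Y ω * Z ω ∂P = ∫ ω, (Y ω * ind (Y ω)) * Z ω ∂P := by
        rw [← integral_indicator hAm]
        apply integral_congr_ae (Filter.Eventually.of_forall ?_)
        intro ω
        by_cases h : Y ω ∈ Ioi v <;> simp [Set.indicator_apply, h, hinddef]
      have h2 := hprod (fun x => x * ind x) (measurable_id.mul hindm) (fun x => x) measurable_id
      rw [hZmean, mul_zero] at h2
      exact h1.trans h2
    have hIZ2 : ∫ ω in Y ⁻¹' Ioi v, Z ω ^ 2 ∂P = QQ v := by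
      have h1 : ∫ ω in Y ⁻¹' Ioi v, Z ω ^ 2 ∂P = ∫ ω, ind (Y ω) * Z ω ^ 2 ∂P := by
        rw [← integral_indicator hAm]
        apply integral_congr_ae (Filter.Eventually.of_forall ?_)
        intro ω
        by_cases h : Y ω ∈ Ioi v <;> simp [Set.indicator_apply, h, hinddef]
      have h2 := hprod ind hindm (fun x => x ^ 2) (measurable_id.pow_const 2)
      rw [hZsq, mul_one, hindY] at h2
      exact h1.trans h2
    -- integrals of X-expressions
    have hIX : ∫ ω in Y ⁻¹' Ioi v, X ω ∂P = ρ * stdphi v := by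
      simp only [hX]
      rw [integral_add ((hYint.const_mul ρ).integrableOn) ((hZint.const_mul c).integrableOn),
        integral_const_mul, integral_const_mul, hIY, hIZ]
      ring
    have hIXY : ∫ ω in Y ⁻¹' Ioi v, X ω * Y ω ∂P = ρ * (v * stdphi v + QQ v) := by
      simp only [hX]
      have hcong : ∀ ω, (ρ * Y ω + c * Z ω) * Y ω = ρ * Y ω ^ 2 + c * (Y ω * Z ω) :=
        fun ω => by ring
      rw [integral_congr_ae (Filter.Eventually.of_forall hcong),
        integral_add ((hY2int.const_mul ρ).integrableOn) ((hYZint.const_mul c).integrableOn),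
        integral_const_mul, integral_const_mul, hIY2, hIYZ]
      ring
    have hIX2 : ∫ ω in Y ⁻¹' Ioi v, X ω ^ 2 ∂P
        = ρ ^ 2 * (v * stdphi v + QQ v) + c ^ 2 * QQ v := by
      simp only [hX]
      have hcong : ∀ ω, (ρ * Y ω + c * Z ω) ^ 2
          = (ρ ^ 2 * Y ω ^ 2 + (2 * ρ * c) * (Y ω * Z ω)) + c ^ 2 * Z ω ^ 2 :=
        fun ω => by ring
      have hsum1 : Integrable (fun ω => ρ ^ 2 * Y ω ^ 2 + 2 * ρ * c * (Y ω * Z ω))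
          (P.restrict (Y ⁻¹' Ioi v)) :=
        ((hY2int.const_mul (ρ ^ 2)).add (hYZint.const_mul (2 * ρ * c))).integrableOn
      rw [integral_congr_ae (Filter.Eventually.of_forall hcong),
        integral_add hsum1 ((hZ2int.const_mul (c ^ 2)).integrableOn),
        integral_add ((hY2int.const_mul (ρ ^ 2)).integrableOn)
          ((hYZint.const_mul (2 * ρ * c)).integrableOn),
        integral_const_mul, integral_const_mul, integral_const_mul, hIY2, hIYZ, hIZ2]
      ring
    -- conditional expectations
    have hEY : cExp P (Y ⁻¹' Ioi v) Y = stdphi v / QQ v := by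
      unfold cExp
      rw [hIY, hPA]
    have hEY2 : cExp P (Y ⁻¹' Ioi v) (fun ω => Y ω ^ 2) = (v * stdphi v + QQ v) / QQ v := by
      unfold cExp
      rw [hIY2, hPA]
    have hEX : cExp P (Y ⁻¹' Ioi v) X = ρ * stdphi v / QQ v := by
      unfold cExp
      rw [hIX, hPA]
    have hEXY : cExp P (Y ⁻¹' Ioi v) (fun ω => X ω * Y ω)
        = ρ * (v * stdphi v + QQ v) / QQ v := by
      unfold cExp
      rw [hIXY, hPA]
    have hEX2 : cExp P (Y ⁻¹' Ioi v) (fun ω => X ω ^ 2)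
        = (ρ ^ 2 * (v * stdphi v + QQ v) + c ^ 2 * QQ v) / QQ v := by
      unfold cExp
      rw [hIX2, hPA]
    have hvarY : cVar P (Y ⁻¹' Ioi v) Y = sfun v := by
      unfold cVar sfun
      rw [hEY2, hEY]
    have hvarX : cVar P (Y ⁻¹' Ioi v) X = ρ ^ 2 * sfun v + (1 - ρ ^ 2) := by
      unfold cVar sfun
      rw [hEX2, hEX, hc2]
      field_simp
      ring
    have hcov : cCov P (Y ⁻¹' Ioi v) X Y = ρ * sfun v := by
      unfold cCov sfun
      rw [hEXY, hEX, hEY]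
      ring
    unfold cCorr
    rw [hcov, hvarX, hvarY]
  -- limits
  have hden : Tendsto (fun v => Real.sqrt (ρ ^ 2 * sfun v + (1 - ρ ^ 2))) atTop (nhds c) := by
    have h1 : Tendsto (fun v => ρ ^ 2 * sfun v + (1 - ρ ^ 2)) atTop
        (nhds (ρ ^ 2 * 0 + (1 - ρ ^ 2))) := (tendsto_sfun.const_mul _).add tendsto_const_nhds
    rw [mul_zero, zero_add] at h1
    exact (Real.continuous_sqrt.tendsto (1 - ρ ^ 2)).comp h1
  have hnum : Tendsto (fun v => ρ * Real.sqrt (v ^ 2 * sfun v)) atTop (nhds ρ) := by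
    have h1 := (Real.continuous_sqrt.tendsto 1).comp tendsto_v2s
    rw [Real.sqrt_one] at h1
    have h2 := tendsto_const_nhds (x := ρ) (f := atTop (α := ℝ)) |>.mul h1
    rw [mul_one] at h2
    exact h2
  have hmain' : Tendsto (fun v => ρ * Real.sqrt (v ^ 2 * sfun v)
      / Real.sqrt (ρ ^ 2 * sfun v + (1 - ρ ^ 2))) atTop (nhds (ρ / c)) :=
    hnum.div hden hc0.ne'
  have hmain : Tendsto (fun v : ℝ => v * cCorr P {ω | Y ω > v} X Y) atTop (nhds (ρ / c)) := by
    apply hmain'.congr'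
    filter_upwards [eventually_gt_atTop (0:ℝ), eventually_sfun_pos] with v hv hs
    rw [key v]
    have hd : 0 < ρ ^ 2 * sfun v + (1 - ρ ^ 2) := by nlinarith
    have h1 : Real.sqrt ((ρ ^ 2 * sfun v + (1 - ρ ^ 2)) * sfun v)
        = Real.sqrt (ρ ^ 2 * sfun v + (1 - ρ ^ 2)) * Real.sqrt (sfun v) := Real.sqrt_mul hd.le _
    have h2 : Real.sqrt (v ^ 2 * sfun v) = v * Real.sqrt (sfun v) := by
      rw [Real.sqrt_mul (sq_nonneg v), Real.sqrt_sq hv.le]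
    have hss : Real.sqrt (sfun v) * Real.sqrt (sfun v) = sfun v := Real.mul_self_sqrt hs.le
    have hsne : Real.sqrt (sfun v) ≠ 0 := (Real.sqrt_pos.2 hs).ne'
    have hdne : Real.sqrt (ρ ^ 2 * sfun v + (1 - ρ ^ 2)) ≠ 0 := (Real.sqrt_pos.2 hd).ne'
    rw [h2, h1]
    field_simp
    linear_combination hss
  refine ⟨hmain, ?_⟩
  have h1 := hmain.mul tendsto_inv_atTop_zero
  rw [mul_zero] at h1
  apply h1.congr'
  filter_upwards [eventually_gt_atTop (0:ℝ)] with v hv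
  rw [mul_comm v (cCorr P {ω | Y ω > v} X Y), mul_assoc, mul_inv_cancel₀ hv.ne', mul_one]
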